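/- (Aggregated MDP interpretation of the projected operator.) In the finite MDP setting, let π : S → A be a deterministic policy, μ a fully supported probability distribution on S×A, and φ : S×A → I a partition function. Define R_φ(s,a) = [∑_{(t,b): φ(t,b)=φ(s,a)} μ(t,b) R(t,b)] / [∑_{(t,b): φ(t,b)=φ(s,a)} μ(t,b)] and P_φ(s'|s,a) = [∑_{(t,b): φ(t,b)=φ(s,a)} μ(t,b) P(s'|t,b)] / [∑_{(t,b): φ(t,b)=φ(s,a)} μ(t,b)]. Then P_φ is a valid transition function (P_φ(s'|s,a) ≥ 0 and ∑_{s'} P_φ(s'|s,a) = 1), and for every Q : S×A → ℝ and every (s,a), (T_G^π Q)(s,a) = R_φ(s,a) + γ ∑_{s'} P_φ(s'|s,a) Q(s', π(s')); i.e., T_G^π is the policy Bellman operator of π in the aggregated MDP with reward R_φ and transitions P_φ. -/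

import Mathlib

open Finset

/-- Cellwise `μ`-weighted average over the cells of `φ`. -/
noncomputable def cellAvg {S A I : Type*} [Fintype S] [Fintype A] [DecidableEq I]
    (μ : S × A → ℝ) (φ : S × A → I) (h : S × A → ℝ) (x : S × A) : ℝ :=
  (∑ y : S × A, if φ y = φ x then μ y * h y else 0) /
  (∑ y : S × A, if φ y = φ x then μ y else 0)

/-- The policy Bellman operator `T^π`. -/
noncomputable def TPol {S A : Type*} [Fintype S] [Fintype A]
    (R : S × A → ℝ) (P : S × A → S → ℝ) (γ : ℝ) (π : S → A)
    (Q : S × A → ℝ) (x : S × A) : ℝ :=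
  R x + γ * ∑ s' : S, P x s' * Q (s', π s')

/-- aggregated MDP interpretation: the μ-averaged transitions `P_φ` form a
valid transition function, and the projected operator `T_G^π` is exactly the policy Bellman
operator of the aggregated MDP `(R_φ, P_φ)`. -/
theorem stmt_6 {S A I : Type*} [Fintype S] [Fintype A] [Nonempty S] [Nonempty A]
    [DecidableEq I]
    (Rmax : ℝ) (R : S × A → ℝ) (hR : ∀ x, 0 ≤ R x ∧ R x ≤ Rmax)
    (P : S × A → S → ℝ) (hP0 : ∀ x s', 0 ≤ P x s') (hP1 : ∀ x, ∑ s' : S, P x s' = 1)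
    (γ : ℝ) (hγ0 : 0 ≤ γ) (hγ1 : γ < 1)
    (π : S → A)
    (μ : S × A → ℝ) (hμpos : ∀ x, 0 < μ x) (hμsum : ∑ x : S × A, μ x = 1)
    (φ : S × A → I) :
    (∀ x s', 0 ≤ cellAvg μ φ (fun y => P y s') x) ∧
    (∀ x, ∑ s' : S, cellAvg μ φ (fun y => P y s') x = 1) ∧
    (∀ Q : S × A → ℝ, ∀ x,
      cellAvg μ φ (TPol R P γ π Q) x =
        cellAvg μ φ R x + γ * ∑ s' : S, cellAvg μ φ (fun y => P y s') x * Q (s', π s')) := by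
  have hD : ∀ x : S × A, 0 < ∑ y : S × A, if φ y = φ x then μ y else 0 := by
    intro x
    apply Finset.sum_pos'
    · intro y _
      split <;> [exact (hμpos y).le; rfl]
    · exact ⟨x, Finset.mem_univ x, by simp [(hμpos x)]⟩
  refine ⟨?_, ?_, ?_⟩
  · intro x s'
    apply div_nonneg _ (hD x).le
    apply Finset.sum_nonneg
    intro y _
    split <;> [exact mul_nonneg (hμpos y).le (hP0 y s'); rfl]
  · intro x
    unfold cellAvg
    rw [← Finset.sum_div, div_eq_one_iff_eq (hD x).ne', Finset.sum_comm]
    apply Finset.sum_congr rfl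
    intro y _
    split
    · rw [← Finset.mul_sum, hP1 y, mul_one]
    · simp
  · intro Q x
    unfold cellAvg TPol
    have key : ∀ s' : S, (∑ y : S × A, if φ y = φ x then μ y * P y s' else 0) /
        (∑ y : S × A, if φ y = φ x then μ y else 0) * Q (s', π s') =
        (∑ y : S × A, if φ y = φ x then μ y * P y s' * Q (s', π s') else 0) /
        (∑ y : S × A, if φ y = φ x then μ y else 0) := by
      intro s'
      rw [div_mul_eq_mul_div, Finset.sum_mul]
      congr 1
      apply Finset.sum_congr rfl
      intro y _
      split <;> simp
    simp_rw [key]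
    rw [← Finset.sum_div, mul_div_assoc', ← add_div]
    congr 1
    simp_rw [Finset.mul_sum]
    rw [Finset.sum_comm, ← Finset.sum_add_distrib]
    apply Finset.sum_congr rfl
    intro y _
    by_cases h : φ y = φ x
    · simp only [h, if_true]
      rw [mul_add, Finset.mul_sum]
      congr 1
      exact Finset.sum_congr rfl (fun s' _ => by ring)
    · simp [h]
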